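/- The Picard group of the ring Z[T]/(T³ - 1) is trivial, i.e., every rank-one projective module over Z[T]/(T³ - 1) is free. -/

import Mathlib

open Polynomial TensorProduct

/-- The ring `ℤ[T]/(T³ - 1)`. -/
abbrev RingT3sub1 : Type := ℤ[X] ⧸ Ideal.span {(X : ℤ[X]) ^ 3 - 1}

noncomputable section PicAux

namespace PicAux

/-! ### General lemmas about invertible modules -/

variable {R : Type} [CommRing R]

/-- An invertible module is finitely generated. -/
theorem finite_of_inv {M N : Type} [AddCommGroup M] [Module R M]
    [AddCommGroup N] [Module R N] (e : (M ⊗[R] N) ≃ₗ[R] R) : Module.Finite R M := by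
  classical
  obtain ⟨S, hS⟩ := TensorProduct.exists_finset (e.symm 1)
  set M' : Submodule R M := Submodule.span R ((S.image Prod.fst : Finset M) : Set M) with hM'
  have hmem : ∀ i ∈ S, (i : M × N).1 ∈ M' := by
    intro i hi
    apply Submodule.subset_span
    simp only [Finset.coe_image, Set.mem_image, Finset.mem_coe]
    exact ⟨i, hi, rfl⟩
  have hπ : (M'.mkQ).rTensor N = 0 := by
    apply LinearMap.ext; intro x
    have hx : x = e x • e.symm 1 := by
      rw [← map_smul, smul_eq_mul, mul_one, LinearEquiv.symm_apply_apply]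
    rw [hx, map_smul, hS, map_sum]
    have : ∀ i ∈ S, ((M'.mkQ).rTensor N) ((i : M × N).1 ⊗ₜ[R] i.2) = 0 := by
      intro i hi
      rw [LinearMap.rTensor_tmul]
      rw [show M'.mkQ i.1 = 0 from (Submodule.Quotient.mk_eq_zero M').mpr (hmem i hi)]
      exact TensorProduct.zero_tmul _ _
    rw [Finset.sum_congr rfl this]
    simp
  have hsurj : Function.Surjective ((M'.mkQ).rTensor N) :=
    LinearMap.rTensor_surjective N (Submodule.mkQ_surjective M')
  have h0 : ∀ z : (M ⧸ M') ⊗[R] N, z = 0 := by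
    intro z
    obtain ⟨x, rfl⟩ := hsurj z
    rw [hπ]; simp
  -- transport triviality to the quotient
  have hQ0 : ∀ q : M ⧸ M', q = 0 := by
    have hid : (LinearMap.id : ((M ⧸ M') ⊗[R] N) →ₗ[R] ((M ⧸ M') ⊗[R] N)) = 0 :=
      LinearMap.ext fun z => by rw [h0 z]; simp
    have hall : ∀ z : M ⊗[R] ((M ⧸ M') ⊗[R] N), z = 0 := by
      intro z
      have : z = (LinearMap.lTensor M (LinearMap.id :
          ((M ⧸ M') ⊗[R] N) →ₗ[R] ((M ⧸ M') ⊗[R] N))) z := by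
        rw [LinearMap.lTensor_id]; rfl
      rw [this, hid, LinearMap.lTensor_zero]; rfl
    intro q
    let eq1 : (M ⧸ M') ≃ₗ[R] M ⊗[R] ((M ⧸ M') ⊗[R] N) :=
      (TensorProduct.rid R (M ⧸ M')).symm ≪≫ₗ
        (LinearEquiv.lTensor (M ⧸ M') e.symm) ≪≫ₗ
        (TensorProduct.leftComm R (M ⧸ M') M N)
    have := hall (eq1 q)
    have h2 : eq1 q = eq1 0 := by rw [this, map_zero]
    exact eq1.injective h2
  have htop : M' = ⊤ := Submodule.Quotient.subsingleton_iff.mp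
    (subsingleton_of_forall_eq 0 hQ0)
  exact ⟨by rw [← htop]; exact ⟨S.image Prod.fst, rfl⟩⟩

/-- Base change of an invertibility datum. -/
def baseChangeInv {M N : Type} [AddCommGroup M] [Module R M]
    [AddCommGroup N] [Module R N] (A : Type) [CommRing A] [Algebra R A]
    (e : (M ⊗[R] N) ≃ₗ[R] R) :
    ((A ⊗[R] M) ⊗[A] (A ⊗[R] N)) ≃ₗ[A] A :=
  (TensorProduct.AlgebraTensorModule.cancelBaseChange R A A (A ⊗[R] M) N) ≪≫ₗ
    (TensorProduct.AlgebraTensorModule.assoc R R A A M N) ≪≫ₗ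
    (LinearEquiv.baseChange R A _ _ e) ≪≫ₗ
    (TensorProduct.AlgebraTensorModule.rid R A A)

/-- A free module of rank one is isomorphic to the base ring. -/
theorem equiv_of_rank_one {A M : Type} [CommRing A] [Nontrivial A] [AddCommGroup M]
    [Module A M] [Module.Free A M] (h : Module.rank A M = 1) :
    Nonempty (M ≃ₗ[A] A) := by
  let b := Module.Free.chooseBasis A M
  have hmk : Cardinal.mk (Module.Free.ChooseBasisIndex A M) = 1 := by
    rw [b.mk_eq_rank'', h]
  obtain ⟨hsub, hne⟩ := Cardinal.eq_one_iff_unique.mp hmk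
  obtain ⟨i⟩ := hne
  haveI : Unique (Module.Free.ChooseBasisIndex A M) :=
    { default := i, uniq := fun j => Subsingleton.elim _ _ }
  exact ⟨b.repr ≪≫ₗ Finsupp.LinearEquiv.finsuppUnique A A _⟩

/-- Invertible modules over a field have rank one. -/
theorem field_inv_equiv {K V W : Type} [Field K] [AddCommGroup V] [Module K V]
    [AddCommGroup W] [Module K W] (e : (V ⊗[K] W) ≃ₗ[K] K) :
    Nonempty (V ≃ₗ[K] K) := by
  have h : Module.rank K V * Module.rank K W = 1 := by
    rw [← rank_tensorProduct', e.rank_eq, Module.rank_self]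
  have hWne : Module.rank K W ≠ 0 := by
    intro h0; rw [h0, mul_zero] at h; exact zero_ne_one h
  have hVne : Module.rank K V ≠ 0 := by
    intro h0; rw [h0, zero_mul] at h; exact zero_ne_one h
  have hle : Module.rank K V ≤ 1 := by
    calc Module.rank K V = Module.rank K V * 1 := (mul_one _).symm
    _ ≤ Module.rank K V * Module.rank K W :=
        mul_le_mul_right (Cardinal.one_le_iff_ne_zero.mpr hWne) _
    _ = 1 := h
  have hge : (1 : Cardinal) ≤ Module.rank K V := Cardinal.one_le_iff_ne_zero.mpr hVne
  exact equiv_of_rank_one (le_antisymm hle hge)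

/-- Flat modules over a domain are torsion free. -/
theorem flat_nzsd {A M : Type} [CommRing A] [IsDomain A] [AddCommGroup M] [Module A M]
    [Module.Flat A M] : NoZeroSMulDivisors A M := by
  constructor
  intro a m h
  by_cases ha : a = 0
  · exact Or.inl ha
  right
  have hinj : Function.Injective (LinearMap.lsmul A A a) := by
    intro x y hxy
    simp only [LinearMap.lsmul_apply, smul_eq_mul] at hxy
    exact mul_left_cancel₀ ha hxy
  have h2 := Module.Flat.rTensor_preserves_injective_linearMap
    (M := M) (LinearMap.lsmul A A a) hinj
  have h3 : ((LinearMap.lsmul A A a).rTensor M) ((1:A) ⊗ₜ[A] m) = a ⊗ₜ[A] m := by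
    rw [LinearMap.rTensor_tmul, LinearMap.lsmul_apply, smul_eq_mul, mul_one]
  have h4 : a ⊗ₜ[A] m = (0 : A ⊗[A] M) := by
    have : a ⊗ₜ[A] m = (TensorProduct.lid A M).symm (a • m) := by
      simp [TensorProduct.lid, TensorProduct.smul_tmul']
    rw [this, h, map_zero]
  have h5 : (1:A) ⊗ₜ[A] m = (0 : A ⊗[A] M) := by
    apply h2
    rw [h3, h4, map_zero]
  have := congrArg (TensorProduct.lid A M) h5
  simpa using this

/-- Invertible f.g. flat modules over a PID are isomorphic to the ring. -/
theorem pid_inv_equiv {A M₁ N₁ : Type} [CommRing A] [IsDomain A] [IsPrincipalIdealRing A]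
    [AddCommGroup M₁] [Module A M₁] [AddCommGroup N₁] [Module A N₁]
    [Module.Finite A M₁] [Module.Flat A M₁]
    (e : (M₁ ⊗[A] N₁) ≃ₗ[A] A) : Nonempty (M₁ ≃ₗ[A] A) := by
  haveI : NoZeroSMulDivisors A M₁ := flat_nzsd
  haveI : Module.Free A M₁ := Module.free_of_finite_type_torsion_free'
  let K := FractionRing A
  obtain ⟨ψ⟩ := field_inv_equiv (baseChangeInv K e)
  have hr : Module.rank A M₁ = 1 := by
    have h1 : Module.rank K (K ⊗[A] M₁) = Cardinal.lift.{0} (Module.rank A M₁) :=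
      Module.rank_baseChange
    rw [ψ.rank_eq, Module.rank_self, Cardinal.lift_id] at h1
    exact h1.symm
  exact equiv_of_rank_one hr

end PicAux

end PicAux

noncomputable section Rings

namespace PicRings

open PicAux

/-- The ring `ℤ[X]/(X-1) ≅ ℤ`. -/
abbrev Eone : Type := AdjoinRoot ((X : ℤ[X]) - 1)

/-- The ring `ℤ[X]/(X²+X+1)`, the Eisenstein integers. -/
abbrev Ecyc : Type := AdjoinRoot ((X : ℤ[X]) ^ 2 + X + 1)

theorem root_eone : (AdjoinRoot.root ((X : ℤ[X]) - 1)) = 1 := by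
  have h := AdjoinRoot.mk_self (f := (X : ℤ[X]) - 1)
  rw [map_sub, AdjoinRoot.mk_X, map_one, sub_eq_zero] at h
  exact h

/-- `ℤ[X]/(X-1) ≅ ℤ`. -/
def eoneEquiv : Eone ≃+* ℤ := by
  refine RingEquiv.ofRingHom (AdjoinRoot.lift (RingHom.id ℤ) 1 (by simp))
    (Int.castRingHom Eone) ?_ ?_
  swap
  · have h : ((Int.castRingHom Eone).comp ((AdjoinRoot.lift (RingHom.id ℤ) 1 (by simp)))).comp
        (AdjoinRoot.mk ((X : ℤ[X]) - 1)) =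
        (RingHom.id Eone).comp (AdjoinRoot.mk ((X : ℤ[X]) - 1)) := by
      apply Polynomial.ringHom_ext
      · intro a
        simp [AdjoinRoot.lift_mk, AdjoinRoot.mk_C]
      · simp [AdjoinRoot.lift_mk, AdjoinRoot.mk_X, root_eone]
    apply RingHom.ext
    intro x
    obtain ⟨p, rfl⟩ := AdjoinRoot.mk_surjective x
    exact RingHom.congr_fun h p
  · apply RingHom.ext
    intro n
    simp

instance : IsDomain Eone := MulEquiv.isDomain ℤ eoneEquiv.toMulEquiv

instance : IsPrincipalIdealRing Eone :=
  IsPrincipalIdealRing.of_surjective (eoneEquiv.symm : ℤ →+* Eone) eoneEquiv.symm.surjective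

/-- The cyclotomic field `ℚ(ζ₃)`. -/
abbrev K3 : Type := CyclotomicField 3 ℚ

instance : Fact (Nat.Prime 3) := ⟨by norm_num⟩

instance : IsCyclotomicExtension {3} ℚ K3 := CyclotomicField.isCyclotomicExtension 3 ℚ

/-- `ℤ[X]/(X²+X+1) ≅ 𝓞 ℚ(ζ₃)`. -/
def cycEquiv : Ecyc ≃+* NumberField.RingOfIntegers K3 := by
  haveI : NumberField K3 := IsCyclotomicExtension.numberField {3} ℚ K3
  have hζ := IsCyclotomicExtension.zeta_spec 3 ℚ K3
  have hζ' := hζ.toInteger_isPrimitiveRoot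
  have hmin : minpoly ℤ (hζ.integralPowerBasis.gen) = (X : ℤ[X]) ^ 2 + X + 1 := by
    rw [hζ.integralPowerBasis_gen]
    have h1 : minpoly ℤ hζ.toInteger =
        minpoly ℤ (IsCyclotomicExtension.zeta 3 ℚ K3) := by
      have := minpoly.algebraMap_eq (A := ℤ) (B := NumberField.RingOfIntegers K3)
        (B' := K3) (NumberField.RingOfIntegers.coe_injective (K := K3)) hζ.toInteger
      rw [← this]; rfl
    rw [h1]; erw [← Polynomial.cyclotomic_eq_minpoly hζ (by norm_num)]
    rw [Polynomial.cyclotomic_three]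
  refine (AdjoinRoot.equiv' ((X : ℤ[X]) ^ 2 + X + 1) hζ.integralPowerBasis ?_ ?_).toRingEquiv
  · rw [hmin, AdjoinRoot.aeval_eq, AdjoinRoot.mk_self]
  · rw [hζ.integralPowerBasis_gen]
    have h := hζ'.isRoot_cyclotomic (by norm_num)
    rw [Polynomial.cyclotomic_three, Polynomial.IsRoot] at h
    simpa using h

instance : IsDomain Ecyc := MulEquiv.isDomain (NumberField.RingOfIntegers K3) cycEquiv.toMulEquiv

instance : IsPrincipalIdealRing Ecyc := by
  haveI : NumberField K3 := IsCyclotomicExtension.numberField {3} ℚ K3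
  haveI := IsCyclotomicExtension.Rat.three_pid K3
  exact IsPrincipalIdealRing.of_surjective
    (cycEquiv.symm : NumberField.RingOfIntegers K3 →+* Ecyc) cycEquiv.symm.surjective


/-- The quotient map `ℤ[X] → ℤ[X]/(X³-1)`. -/
abbrev mk3 : ℤ[X] →+* RingT3sub1 := Ideal.Quotient.mk _

theorem dvd1 : ((X : ℤ[X]) - 1) ∣ ((X : ℤ[X]) ^ 3 - 1) := ⟨X ^ 2 + X + 1, by ring⟩

theorem dvd2 : ((X : ℤ[X]) ^ 2 + X + 1) ∣ ((X : ℤ[X]) ^ 3 - 1) := ⟨X - 1, by ring⟩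

/-- Projection `ℤ[X]/(X³-1) → ℤ[X]/(X-1)`. -/
def pi1 : RingT3sub1 →+* Eone :=
  Ideal.Quotient.lift _ (AdjoinRoot.mk ((X : ℤ[X]) - 1)) (by
    intro a ha
    rw [Ideal.mem_span_singleton] at ha
    rw [AdjoinRoot.mk_eq_zero]
    exact dvd_trans dvd1 ha)

/-- Projection `ℤ[X]/(X³-1) → ℤ[X]/(X²+X+1)`. -/
def pi2 : RingT3sub1 →+* Ecyc :=
  Ideal.Quotient.lift _ (AdjoinRoot.mk ((X : ℤ[X]) ^ 2 + X + 1)) (by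
    intro a ha
    rw [Ideal.mem_span_singleton] at ha
    rw [AdjoinRoot.mk_eq_zero]
    exact dvd_trans dvd2 ha)

/-- `ℤ[X]/(X-1) → ZMod 3`, `X ↦ 1`. -/
def rho1 : Eone →+* ZMod 3 :=
  AdjoinRoot.lift (Int.castRingHom (ZMod 3)) 1 (by simp)

/-- `ℤ[X]/(X²+X+1) → ZMod 3`, `X ↦ 1`. -/
def rho2 : Ecyc →+* ZMod 3 :=
  AdjoinRoot.lift (Int.castRingHom (ZMod 3)) 1 (by
    simp only [eval₂_add, eval₂_pow, eval₂_X, eval₂_one]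
    decide)

/-- The map to the residue ring `ZMod 3`. -/
def pi3 : RingT3sub1 →+* ZMod 3 := rho2.comp pi2

theorem pi1_mk (p : ℤ[X]) : pi1 (mk3 p) = AdjoinRoot.mk _ p := rfl

theorem pi2_mk (p : ℤ[X]) : pi2 (mk3 p) = AdjoinRoot.mk _ p := rfl

theorem rho1_mk (p : ℤ[X]) : rho1 (AdjoinRoot.mk _ p) = ((p.eval 1 : ℤ) : ZMod 3) := by
  rw [show rho1 (AdjoinRoot.mk _ p) = eval₂ (Int.castRingHom (ZMod 3)) 1 p from
    AdjoinRoot.lift_mk _ p]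
  rw [show (1 : ZMod 3) = (Int.castRingHom (ZMod 3)) 1 from rfl, Polynomial.eval₂_at_apply]
  simp

theorem rho2_mk (p : ℤ[X]) : rho2 (AdjoinRoot.mk _ p) = ((p.eval 1 : ℤ) : ZMod 3) := by
  rw [show rho2 (AdjoinRoot.mk _ p) = eval₂ (Int.castRingHom (ZMod 3)) 1 p from
    AdjoinRoot.lift_mk _ p]
  rw [show (1 : ZMod 3) = (Int.castRingHom (ZMod 3)) 1 from rfl, Polynomial.eval₂_at_apply]
  simp

theorem mk3_surjective : Function.Surjective mk3 := Ideal.Quotient.mk_surjective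

theorem pi1_surjective : Function.Surjective pi1 := by
  intro x
  obtain ⟨p, rfl⟩ := AdjoinRoot.mk_surjective x
  exact ⟨mk3 p, pi1_mk p⟩

theorem pi2_surjective : Function.Surjective pi2 := by
  intro x
  obtain ⟨p, rfl⟩ := AdjoinRoot.mk_surjective x
  exact ⟨mk3 p, pi2_mk p⟩

theorem rho1_surjective : Function.Surjective rho1 := by
  intro z
  obtain ⟨k, rfl⟩ := ZMod.intCast_surjective (n := 3) z
  exact ⟨(k : Eone), by rw [map_intCast]⟩

/-- Compatibility: the square commutes. -/
theorem hcomp : ∀ r : RingT3sub1, rho1 (pi1 r) = pi3 r := by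
  intro r
  obtain ⟨p, rfl⟩ := mk3_surjective r
  rw [pi1_mk, rho1_mk]
  rw [show pi3 (mk3 p) = rho2 (AdjoinRoot.mk _ p) from rfl, rho2_mk]

theorem natdeg_cyc : ((X : ℤ[X]) ^ 2 + X + 1).natDegree = 2 := by
  compute_degree!

theorem prime_cyc : Prime ((X : ℤ[X]) ^ 2 + X + 1) := by
  rw [← Polynomial.cyclotomic_three ℤ]
  exact (Polynomial.cyclotomic.irreducible (by norm_num)).prime

/-- Joint injectivity of the two projections. -/
theorem hinj : ∀ r : RingT3sub1, pi1 r = 0 → pi2 r = 0 → r = 0 := by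
  intro r h1 h2
  obtain ⟨p, rfl⟩ := mk3_surjective r
  rw [pi1_mk, AdjoinRoot.mk_eq_zero] at h1
  rw [pi2_mk, AdjoinRoot.mk_eq_zero] at h2
  obtain ⟨q, rfl⟩ := h1
  have hnd : ¬ ((X : ℤ[X]) ^ 2 + X + 1) ∣ ((X : ℤ[X]) - 1) := by
    intro hd
    have hne : ((X : ℤ[X]) - 1) ≠ 0 := by
      intro h0
      have := congrArg (Polynomial.eval 0) h0
      simp at this
    have hle := Polynomial.natDegree_le_of_dvd hd hne
    rw [natdeg_cyc] at hle
    have : ((X : ℤ[X]) - 1).natDegree = 1 := by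
      rw [show ((X : ℤ[X]) - 1) = X - Polynomial.C 1 by simp]
      exact Polynomial.natDegree_X_sub_C 1
    omega
  have hq : ((X : ℤ[X]) ^ 2 + X + 1) ∣ q := (prime_cyc.dvd_mul.mp h2).resolve_left hnd
  obtain ⟨t, rfl⟩ := hq
  rw [show ((X : ℤ[X]) - 1) * (((X : ℤ[X]) ^ 2 + X + 1) * t) = ((X : ℤ[X]) ^ 3 - 1) * t by ring]
  rw [show (0 : RingT3sub1) = mk3 0 from rfl]
  rw [Ideal.Quotient.mk_eq_mk_iff_sub_mem]
  rw [sub_zero, Ideal.mem_span_singleton]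
  exact Dvd.intro t rfl

/-- The fibre-product property: compatible pairs lift. -/
theorem himg : ∀ (a : Eone) (b : Ecyc), rho1 a = rho2 b →
    ∃ r : RingT3sub1, pi1 r = a ∧ pi2 r = b := by
  intro a b hab
  obtain ⟨pa, rfl⟩ := AdjoinRoot.mk_surjective a
  obtain ⟨pb, rfl⟩ := AdjoinRoot.mk_surjective b
  rw [rho1_mk, rho2_mk] at hab
  have h3 : (3 : ℤ) ∣ (pa.eval 1 - pb.eval 1) := by
    have : ((pa.eval 1 - pb.eval 1 : ℤ) : ZMod 3) = 0 := by
      push_cast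
      rw [hab, sub_self]
    exact_mod_cast (ZMod.intCast_zmod_eq_zero_iff_dvd _ 3).mp this
  obtain ⟨k, hk⟩ := h3
  refine ⟨mk3 (pb + Polynomial.C k * ((X : ℤ[X]) ^ 2 + X + 1)), ?_, ?_⟩
  · rw [pi1_mk, AdjoinRoot.mk_eq_mk]
    rw [show ((X : ℤ[X]) - 1) = X - Polynomial.C 1 by simp]
    rw [Polynomial.dvd_iff_isRoot]
    simp only [Polynomial.IsRoot, Polynomial.eval_sub, Polynomial.eval_add,
      Polynomial.eval_mul, Polynomial.eval_C, Polynomial.eval_pow, Polynomial.eval_X,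
      Polynomial.eval_one]
    linarith [hk]
  · rw [pi2_mk]
    rw [map_add, map_mul, AdjoinRoot.mk_self, mul_zero, add_zero]

end PicRings
end Rings


noncomputable section MainProof

open PicRings PicAux

theorem rho2_surjective : Function.Surjective rho2 := by
  intro z
  obtain ⟨k, rfl⟩ := ZMod.intCast_surjective (n := 3) z
  exact ⟨(k : Ecyc), by rw [map_intCast]⟩

theorem hcomp2 : ∀ r : RingT3sub1, rho2 (pi2 r) = pi3 r := fun _ => rfl

set_option maxHeartbeats 1000000 in
theorem stmt3Main (M : Type) [AddCommGroup M] [Module RingT3sub1 M]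
    [Module.Projective RingT3sub1 M]
    (hinv : ∃ (N : Type) (_ : AddCommGroup N) (_ : Module RingT3sub1 N),
      Nonempty ((M ⊗[RingT3sub1] N) ≃ₗ[RingT3sub1] RingT3sub1)) :
    Module.Free RingT3sub1 M := by
  obtain ⟨N, _, _, ⟨e⟩⟩ := hinv
  haveI hfin : Module.Finite RingT3sub1 M := PicAux.finite_of_inv e
  haveI hflat : Module.Flat RingT3sub1 M := inferInstance
  letI aE1 : Algebra RingT3sub1 Eone := pi1.toAlgebra
  letI aE2 : Algebra RingT3sub1 Ecyc := pi2.toAlgebra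
  letI aZ3 : Algebra RingT3sub1 (ZMod 3) := pi3.toAlgebra
  -- base-changed invertibility data
  obtain ⟨φ₁⟩ := PicAux.pid_inv_equiv (PicAux.baseChangeInv Eone e)
  obtain ⟨φ₂⟩ := PicAux.pid_inv_equiv (PicAux.baseChangeInv Ecyc e)
  obtain ⟨ψ⟩ := PicAux.field_inv_equiv (PicAux.baseChangeInv (ZMod 3) e)
  -- the exact sequence R → Eone × Ecyc → ZMod 3
  set π₁L : RingT3sub1 →ₗ[RingT3sub1] Eone := Algebra.linearMap _ _ with hπ₁L
  set π₂L : RingT3sub1 →ₗ[RingT3sub1] Ecyc := Algebra.linearMap _ _ with hπ₂L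
  set ρ₁L : Eone →ₗ[RingT3sub1] ZMod 3 :=
    { toFun := rho1,
      map_add' := fun x y => map_add _ _ _,
      map_smul' := fun r x => by
        simp only [RingHom.id_apply]
        rw [Algebra.smul_def, Algebra.smul_def, map_mul]
        congr 1
        exact hcomp r } with hρ₁L
  set ρ₂L : Ecyc →ₗ[RingT3sub1] ZMod 3 :=
    { toFun := rho2,
      map_add' := fun x y => map_add _ _ _,
      map_smul' := fun r x => by
        simp only [RingHom.id_apply]
        rw [Algebra.smul_def, Algebra.smul_def, map_mul]
        congr 1 } with hρ₂L
  set f : RingT3sub1 →ₗ[RingT3sub1] (Eone × Ecyc) := π₁L.prod π₂L with hf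
  set g : (Eone × Ecyc) →ₗ[RingT3sub1] ZMod 3 :=
    ρ₁L.comp (LinearMap.fst _ _ _) - ρ₂L.comp (LinearMap.snd _ _ _) with hg
  have hgapp : ∀ y : Eone × Ecyc, g y = rho1 y.1 - rho2 y.2 := fun y => rfl
  have hfapp : ∀ r : RingT3sub1, f r = (pi1 r, pi2 r) := fun r => rfl
  have hfg : Function.Exact f g := by
    intro y
    constructor
    · intro hy
      rw [hgapp y, sub_eq_zero] at hy
      obtain ⟨r, hr1, hr2⟩ := himg y.1 y.2 hy
      refine ⟨r, ?_⟩
      rw [hfapp r, hr1, hr2]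
    · rintro ⟨r, rfl⟩
      rw [hfapp r, hgapp]
      simp only [hcomp r, hcomp2 r]
      exact sub_self _
  have hfinj : Function.Injective f := by
    intro x y hxy
    have h0 : f (x - y) = 0 := by rw [map_sub, hxy, sub_self]
    rw [hfapp (x - y), Prod.mk_eq_zero] at h0
    have := hinj _ h0.1 h0.2
    rwa [sub_eq_zero] at this
  set F := f.rTensor M with hF
  set G := g.rTensor M with hG
  have hFinj : Function.Injective F :=
    Module.Flat.rTensor_preserves_injective_linearMap f hfinj
  have hFG : Function.Exact F G := Module.Flat.rTensor_exact M hfg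
  set P : ((Eone × Ecyc) ⊗[RingT3sub1] M) ≃ₗ[RingT3sub1]
      ((Eone ⊗[RingT3sub1] M) × (Ecyc ⊗[RingT3sub1] M)) :=
    TensorProduct.prodLeft RingT3sub1 RingT3sub1 Eone Ecyc M with hP
  set δ₁ := ρ₁L.rTensor M with hδ₁
  set δ₂ := ρ₂L.rTensor M with hδ₂
  have hGP : ∀ z, G z = δ₁ (P z).1 - δ₂ (P z).2 := by
    have key : G = (δ₁.comp (LinearMap.fst _ _ _) - δ₂.comp (LinearMap.snd _ _ _)).comp
        (P : ((Eone × Ecyc) ⊗[RingT3sub1] M) →ₗ[RingT3sub1] _) := by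
      apply TensorProduct.ext'
      intro ab m
      obtain ⟨a, b⟩ := ab
      simp only [hG, LinearMap.rTensor_tmul, LinearMap.comp_apply, LinearEquiv.coe_coe, hP,
        TensorProduct.prodLeft_tmul, LinearMap.sub_apply, LinearMap.fst_apply,
        LinearMap.snd_apply, hδ₁, hδ₂]
      rw [hgapp (a, b)]
      exact TensorProduct.sub_tmul _ _ _
    intro z
    rw [key]
    rfl
  -- scalar transport
  have hsm1 : ∀ (r : RingT3sub1) (x : Eone ⊗[RingT3sub1] M), pi1 r • x = r • x :=
    fun r x => algebraMap_smul Eone r x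
  have hsm2 : ∀ (r : RingT3sub1) (x : Ecyc ⊗[RingT3sub1] M), pi2 r • x = r • x :=
    fun r x => algebraMap_smul Ecyc r x
  have hsm3 : ∀ (r : RingT3sub1) (x : (ZMod 3) ⊗[RingT3sub1] M), pi3 r • x = r • x :=
    fun r x => algebraMap_smul (ZMod 3) r x
  have hδ₁s : ∀ (a : Eone) (x : Eone ⊗[RingT3sub1] M), δ₁ (a • x) = rho1 a • δ₁ x := by
    intro a x
    obtain ⟨r, rfl⟩ := pi1_surjective a
    rw [hsm1 r x, map_smul, hcomp r, hsm3 r (δ₁ x)]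
  have hδ₂s : ∀ (b : Ecyc) (x : Ecyc ⊗[RingT3sub1] M), δ₂ (b • x) = rho2 b • δ₂ x := by
    intro b x
    obtain ⟨r, rfl⟩ := pi2_surjective b
    rw [hsm2 r x, map_smul, hcomp2 r, hsm3 r (δ₂ x)]
  -- generators
  set u₀ := φ₁.symm 1 with hu₀
  set v := φ₂.symm 1 with hv
  set c₁ := ψ (δ₁ u₀) with hc₁def
  set c₂ := ψ (δ₂ v) with hc₂def
  have hρ₁Lsurj : Function.Surjective ρ₁L := fun z => by
    obtain ⟨a, ha⟩ := rho1_surjective z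
    exact ⟨a, ha⟩
  have hρ₂Lsurj : Function.Surjective ρ₂L := fun z => by
    obtain ⟨a, ha⟩ := rho2_surjective z
    exact ⟨a, ha⟩
  have hδ₁surj : Function.Surjective δ₁ := LinearMap.rTensor_surjective M hρ₁Lsurj
  have hδ₂surj : Function.Surjective δ₂ := LinearMap.rTensor_surjective M hρ₂Lsurj
  have hgen0 : ∀ x : Eone ⊗[RingT3sub1] M, x = (φ₁ x) • u₀ := by
    intro x
    rw [hu₀, ← map_smul, smul_eq_mul, mul_one, LinearEquiv.symm_apply_apply]
  have hgen0' : ∀ y : Ecyc ⊗[RingT3sub1] M, y = (φ₂ y) • v := by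
    intro y
    rw [hv, ← map_smul, smul_eq_mul, mul_one, LinearEquiv.symm_apply_apply]
  have hone : (1 : ZMod 3) ≠ 0 := one_ne_zero
  have hc₁ne : c₁ ≠ 0 := by
    intro h0
    have hδu : δ₁ u₀ = 0 := by
      rw [hc₁def] at h0
      exact (LinearEquiv.map_eq_zero_iff ψ).mp h0
    have hall : ∀ z : (ZMod 3) ⊗[RingT3sub1] M, z = 0 := by
      intro z
      obtain ⟨x, rfl⟩ := hδ₁surj z
      rw [hgen0 x, hδ₁s (φ₁ x) u₀, hδu, smul_zero]
    apply hone
    have h1 := hall (ψ.symm 1)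
    have h2 := congrArg ψ h1
    rwa [LinearEquiv.apply_symm_apply, map_zero] at h2
  have hc₂ne : c₂ ≠ 0 := by
    intro h0
    have hδv : δ₂ v = 0 := by
      rw [hc₂def] at h0
      exact (LinearEquiv.map_eq_zero_iff ψ).mp h0
    have hall : ∀ z : (ZMod 3) ⊗[RingT3sub1] M, z = 0 := by
      intro z
      obtain ⟨y, rfl⟩ := hδ₂surj z
      rw [hgen0' y, hδ₂s (φ₂ y) v, hδv, smul_zero]
    apply hone
    have h1 := hall (ψ.symm 1)
    have h2 := congrArg ψ h1
    rwa [LinearEquiv.apply_symm_apply, map_zero] at h2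
  -- sign adjustment
  have hcases : ∀ x y : ZMod 3, x ≠ 0 → y ≠ 0 → (y = x ∨ y = -x) := by decide
  obtain ⟨s, hs2, hsc⟩ : ∃ s : ℤ, s * s = 1 ∧ ((s : ZMod 3)) * c₁ = c₂ := by
    rcases hcases c₁ c₂ hc₁ne hc₂ne with h | h
    · exact ⟨1, by norm_num, by rw [Int.cast_one, one_mul, h]⟩
    · refine ⟨-1, by norm_num, ?_⟩
      rw [Int.cast_neg, Int.cast_one, neg_one_mul, ← h]
  set u' := φ₁.symm ((s : ℤ) : Eone) with hu'
  have hss : (((s : ℤ) : Eone)) * ((s : ℤ) : Eone) = 1 := by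
    rw [← Int.cast_mul, hs2, Int.cast_one]
  have hφu' : φ₁ u' = ((s : ℤ) : Eone) := by rw [hu', LinearEquiv.apply_symm_apply]
  have hgen1 : ∀ x : Eone ⊗[RingT3sub1] M, x = ((φ₁ x) * ((s : ℤ) : Eone)) • u' := by
    intro x
    rw [hu', ← map_smul, smul_eq_mul, mul_assoc, hss, mul_one, LinearEquiv.symm_apply_apply]
  have hu'u₀ : u' = ((s : ℤ) : Eone) • u₀ := by
    rw [hu', hu₀, ← map_smul, smul_eq_mul, mul_one]
  have hψu' : ψ (δ₁ u') = c₂ := by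
    rw [hu'u₀, hδ₁s, map_intCast, map_smul, smul_eq_mul, ← hc₁def, hsc]
  have hψv : ψ (δ₂ v) = c₂ := hc₂def.symm
  have hdeq : δ₁ u' = δ₂ v := ψ.injective (hψu'.trans hψv.symm)
  -- pull back the compatible pair of generators
  obtain ⟨w, hw⟩ := (hFG (P.symm (u', v))).mp (by
    rw [hGP, LinearEquiv.apply_symm_apply, hdeq, sub_self])
  -- hw : F w = P.symm (u', v)
  have hbij : Function.Bijective (LinearMap.toSpanSingleton RingT3sub1
      (RingT3sub1 ⊗[RingT3sub1] M) w) := by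
    constructor
    · -- injectivity
      have hker : ∀ r : RingT3sub1, r • w = 0 → r = 0 := by
        intro r hr
        have hFr : P (F (r • w)) = (pi1 r • u', pi2 r • v) := by
          rw [map_smul, hw, map_smul, LinearEquiv.apply_symm_apply]
          have : r • ((u', v) : (Eone ⊗[RingT3sub1] M) × (Ecyc ⊗[RingT3sub1] M))
              = (r • u', r • v) := rfl
          rw [this, hsm1 r u', hsm2 r v]
        rw [hr, map_zero, map_zero] at hFr
        have h1 : pi1 r • u' = 0 := (congrArg Prod.fst hFr).symm
        have h2 : pi2 r • v = 0 := (congrArg Prod.snd hFr).symm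
        have h1' : pi1 r * ((s : ℤ) : Eone) = 0 := by
          have := congrArg φ₁ h1
          rwa [map_smul, hφu', smul_eq_mul, map_zero] at this
        have h1'' : pi1 r = 0 := by
          have := congrArg (· * ((s : ℤ) : Eone)) h1'
          simpa [mul_assoc, hss] using this
        have h2' : pi2 r = 0 := by
          have := congrArg φ₂ h2
          rw [map_smul, hv, LinearEquiv.apply_symm_apply, smul_eq_mul, mul_one, map_zero] at this
          exact this
        exact hinj r h1'' h2'
      intro r r' hrr
      have h0 : (r - r') • w = 0 := by
        rw [show (r - r') • w = r • w - r' • w from sub_smul r r' w]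
        rw [show (r • w : RingT3sub1 ⊗[RingT3sub1] M) = LinearMap.toSpanSingleton
          RingT3sub1 (RingT3sub1 ⊗[RingT3sub1] M) w r from rfl]
        rw [show (r' • w : RingT3sub1 ⊗[RingT3sub1] M) = LinearMap.toSpanSingleton
          RingT3sub1 (RingT3sub1 ⊗[RingT3sub1] M) w r' from rfl]
        rw [hrr, sub_self]
      have := hker _ h0
      rwa [sub_eq_zero] at this
    · -- surjectivity
      intro z
      set x := (P (F z)).1 with hxdef
      set y := (P (F z)).2 with hydef
      have hx : x = ((φ₁ x) * ((s : ℤ) : Eone)) • u' := hgen1 x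
      have hy : y = (φ₂ y) • v := hgen0' y
      have h0 : δ₁ x - δ₂ y = 0 := by
        have hz := hFG.apply_apply_eq_zero z
        rw [hGP (F z)] at hz
        exact hz
      have hcmp : rho1 ((φ₁ x) * ((s : ℤ) : Eone)) = rho2 (φ₂ y) := by
        have e1 : δ₁ x = rho1 ((φ₁ x) * ((s : ℤ) : Eone)) • δ₁ u' := by
          calc δ₁ x = δ₁ (((φ₁ x) * ((s : ℤ) : Eone)) • u') := by rw [← hx]
          _ = _ := hδ₁s _ _
        have e2 : δ₂ y = rho2 (φ₂ y) • δ₁ u' := by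
          calc δ₂ y = δ₂ ((φ₂ y) • v) := by rw [← hy]
          _ = rho2 (φ₂ y) • δ₂ v := hδ₂s _ _
          _ = _ := by rw [hdeq]
        have h1 : (rho1 ((φ₁ x) * ((s : ℤ) : Eone)) - rho2 (φ₂ y)) • δ₁ u' = 0 := by
          rw [show (rho1 ((φ₁ x) * ((s : ℤ) : Eone)) - rho2 (φ₂ y)) • δ₁ u' =
            rho1 ((φ₁ x) * ((s : ℤ) : Eone)) • δ₁ u' - rho2 (φ₂ y) • δ₁ u' from
              sub_smul (R := ZMod 3) (M := ZMod 3 ⊗[RingT3sub1] M) _ _ _,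
            ← e1, ← e2, h0]
        have h2 := congrArg ψ h1
        rw [map_smul, map_zero, smul_eq_mul, hψu'] at h2
        rcases mul_eq_zero.mp h2 with h | h
        · exact sub_eq_zero.mp h
        · exact absurd h hc₂ne
      obtain ⟨r, hr1, hr2⟩ := himg _ _ hcmp
      refine ⟨r, ?_⟩
      apply hFinj
      rw [show F (LinearMap.toSpanSingleton RingT3sub1 (RingT3sub1 ⊗[RingT3sub1] M) w r)
        = F (r • w) from rfl]
      rw [map_smul, hw]
      apply P.injective
      rw [map_smul, LinearEquiv.apply_symm_apply]
      have hcx : r • u' = x := by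
        rw [← hsm1 r u', hr1, ← hx]
      have hcy : r • v = y := by
        rw [← hsm2 r v, hr2, ← hy]
      calc r • ((u', v) : (Eone ⊗[RingT3sub1] M) × (Ecyc ⊗[RingT3sub1] M))
          = (r • u', r • v) := rfl
      _ = (x, y) := by rw [hcx, hcy]
      _ = P (F z) := Prod.mk.eta
  exact Module.Free.of_equiv ((LinearEquiv.ofBijective _ hbij).trans
    (TensorProduct.lid RingT3sub1 M))

end MainProof

/-- The Picard group of `ℤ[T]/(T³ - 1)` is trivial, i.e. every rank-one
projective (= invertible) module over `ℤ[T]/(T³ - 1)` is free. -/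
theorem stmt3 (M : Type) [AddCommGroup M] [Module RingT3sub1 M]
    [Module.Projective RingT3sub1 M]
    (hinv : ∃ (N : Type) (_ : AddCommGroup N) (_ : Module RingT3sub1 N),
      Nonempty ((M ⊗[RingT3sub1] N) ≃ₗ[RingT3sub1] RingT3sub1)) :
    Module.Free RingT3sub1 M :=
  stmt3Main M hinv
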